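/- Let X be a finite set and b a partition of X. For partitions p, p' of X, say p' is directly smaller than p for a partial order ≼ if p' ≼ p, p' ≠ p, and there is no p'' distinct from p and p' with p' ≼ p'' ≼ p. Then p' is directly smaller than p for the geodesic order ≤_b if and only if either p' is directly smaller than p for the finer-compatible order ⊐_b, or p' is directly smaller than p for the coarser-compatible order ⊣_b. -/

import Mathlib

open Sum
open scoped Classical

noncomputable section

namespace PartitionPaper

variable {X : Type*}

/-- The number of blocks of a partition of `X`, encoded as a setoid on `X`. -/
def nc (p : Setoid X) : ℕ := Nat.card (Quotient p)

/-- The geodesic distance `d(p,p') = (nc p + nc p')/2 - nc (p ⊔ p')`. -/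
def pdist (p q : Setoid X) : ℚ :=
  ((nc p : ℚ) + (nc q : ℚ)) / 2 - (nc (p ⊔ q) : ℚ)

/-- Geodesic order with base partition `b` : `p' ≤_b p`. -/
def geoLE (b p' p : Setoid X) : Prop := pdist b p' + pdist p' p = pdist b p

/-- Coarser-compatible order `p' ⊣_b p` : `p'` coarser than `p` and
`nc (p' ⊔ b) = nc (p ⊔ b)`.  (In the setoid lattice, `p ≤ p'` means `p` is finer.) -/
def coarserComp (b p' p : Setoid X) : Prop :=
  p ≤ p' ∧ nc (p' ⊔ b) = nc (p ⊔ b)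

/-- Finer-compatible order `p' ⊐_b p` : `p'` finer than `p` and
`nc p' - nc (p' ⊔ b) = nc p - nc (p ⊔ b)`. -/
def finerComp (b p' p : Setoid X) : Prop :=
  p' ≤ p ∧ (nc p' : ℤ) - (nc (p' ⊔ b) : ℤ) = (nc p : ℤ) - (nc (p ⊔ b) : ℤ)

/-- `p'` is obtained from `p` by gluing two blocks of `p` into one. -/
def IsGluing (p p' : Setoid X) : Prop := p ≤ p' ∧ nc p' + 1 = nc p

/-- The Cayley graph on partitions of `X`: an edge iff one partition is obtained
from the other by gluing two of its blocks into one. -/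
def glueGraph (X : Type*) : SimpleGraph (Setoid X) where
  Adj p q := IsGluing p q ∨ IsGluing q p
  symm := ⟨fun _ _ h => h.elim Or.inr Or.inl⟩
  loopless := by
    constructor
    intro p h
    rcases h with ⟨-, h⟩ | ⟨-, h⟩ <;> omega

/-- The segment `[p₁, p₂]` for the geodesic distance. -/
def seg (p₁ p₂ : Setoid X) : Set (Setoid X) :=
  {p | pdist p₁ p + pdist p p₂ = pdist p₁ p₂}

/-- The defect of `p'` from being on `[b, p]`. -/
def df (b p' p : Setoid X) : ℚ := pdist b p' + pdist p' p - pdist b p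

/-- Admissible one-step splits: `p'` is obtained by cutting a (pivotal) block of `p`
into two blocks in such a way that the join with `b` gains one block. -/
def Delta (b p : Setoid X) : Set (Setoid X) :=
  {p' | p' ≤ p ∧ nc p' = nc p + 1 ∧ nc (p' ⊔ b) = nc (p ⊔ b) + 1}

/-- The admissible splits `Sp_b(p) = ⋃ₘ Δ_b^m(p)`. -/
def Sp (b p : Setoid X) : Set (Setoid X) :=
  {p' | Relation.ReflTransGen (fun u v => v ∈ Delta b u) p p'}

/-- The admissible gluings `Gl_b(p)`: partitions obtained by gluing blocks of `p`
without altering the number of blocks of the join with `b`. -/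
def Gl (b p : Setoid X) : Set (Setoid X) :=
  {p' | p ≤ p' ∧ nc (p' ⊔ b) = nc (p ⊔ b)}

/-- `p'` is directly smaller than `p` for the relation `r`. -/
def DirectlySmaller (r : Setoid X → Setoid X → Prop) (p' p : Setoid X) : Prop :=
  r p' p ∧ p' ≠ p ∧ ¬ ∃ p'', p'' ≠ p ∧ p'' ≠ p' ∧ r p' p'' ∧ r p'' p

/-- The block of the partition `p` corresponding to a class `c`. -/
def blockSet (p : Setoid X) (c : Quotient p) : Set X := {x | Quotient.mk p x = c}

/-- The number of blocks of `q` contained in the block `c` of `p`. -/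
def numSubBlocks (q p : Setoid X) (c : Quotient p) : ℕ :=
  Nat.card {d : Quotient q // blockSet q d ⊆ blockSet p c}

/-- The number of blocks of `p` containing exactly `i` blocks of `q`. -/
def rcount (q p : Setoid X) (i : ℕ) : ℕ :=
  Nat.card {c : Quotient p // numSubBlocks q p c = i}

/-- The Möbius function of the refinement order:
`μ_f(q,p) = (-1)^(nc q - nc p) ∏_i ((i-1)!)^(r_i)` for `q` finer than `p`. -/
def muf (q p : Setoid X) : ℤ :=
  (-1) ^ (nc q - nc p) *
    ∏ i ∈ Finset.range (nc q + 1), ((Nat.factorial (i - 1) : ℤ)) ^ (rcount q p i)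

/-- `P_k`: partitions of `{1,…,k} ∪ {1',…,k'}`, the left summand being the
unprimed (top) row and the right summand the primed (bottom) row. -/
abbrev Pk (k : ℕ) := Setoid (Fin k ⊕ Fin k)

/-- The identity partition `id_k = {{i, i'} : 1 ≤ i ≤ k}`. -/
def idk (k : ℕ) : Pk k := Setoid.ker (Sum.elim id id)

/-- The permutation partition associated with `σ`, with blocks `{i, σ(i)'}`. -/
def permPartition {k : ℕ} (σ : Equiv.Perm (Fin k)) : Pk k :=
  Setoid.ker (Sum.elim id σ.symm)

/-- `S_k`, the set of permutation partitions. -/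
def Sk (k : ℕ) : Set (Pk k) := Set.range (permPartition (k := k))

/-- `B_k`, the set of Brauer partitions: all blocks have exactly two elements. -/
def Bk (k : ℕ) : Set (Pk k) := {p | ∀ x, Nat.card {y | p x y} = 2}

/-- Embedding of the top/bottom rows of the upper diagram `q` into the
three-row diagram (top ⊕ (middle ⊕ bottom)). -/
def upMap (k : ℕ) : Fin k ⊕ Fin k → Fin k ⊕ (Fin k ⊕ Fin k) :=
  Sum.elim Sum.inl (fun i => Sum.inr (Sum.inl i))

/-- Embedding of the top/bottom rows of the lower diagram `p` into the
three-row diagram. -/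
def downMap (k : ℕ) : Fin k ⊕ Fin k → Fin k ⊕ (Fin k ⊕ Fin k) :=
  Sum.elim (fun i => Sum.inr (Sum.inl i)) (fun i => Sum.inr (Sum.inr i))

/-- The partition of the three-row diagram obtained by stacking a diagram of `q`
on top of a diagram of `p` (identifying the bottom row of `q` with the top row
of `p`): the equivalence relation generated by the copies of `q` and `p`. -/
def stackSetoid {k : ℕ} (p q : Pk k) : Setoid (Fin k ⊕ (Fin k ⊕ Fin k)) :=
  sInf {s | ∀ x y,
    ((∃ a b, upMap k a = x ∧ upMap k b = y ∧ q a b) ∨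
     (∃ a b, downMap k a = x ∧ downMap k b = y ∧ p a b)) → s x y}

/-- The composition `p ∘ q` (a diagram of `q` stacked above a diagram of `p`),
obtained by restricting the stacked partition to the outer rows. -/
def comp {k : ℕ} (p q : Pk k) : Pk k :=
  Setoid.comap (Sum.elim Sum.inl (fun i => Sum.inr (Sum.inr i))) (stackSetoid p q)

/-- `κ(p,q)`: the number of connected components of the stacked diagram entirely
contained in the middle row. -/
def kappaP {k : ℕ} (p q : Pk k) : ℕ :=
  Nat.card {c : Quotient (stackSetoid p q) //
    ∀ x, Quotient.mk (stackSetoid p q) x = c → ∃ i : Fin k, x = Sum.inr (Sum.inl i)}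

/-- The transpose `ᵗp`, exchanging the two rows. -/
def transpose {k : ℕ} (p : Pk k) : Pk k := Setoid.comap Sum.swap p

/-- The disjoint-union partition on a sum type. -/
def sumSetoid {α β : Type*} (p : Setoid α) (q : Setoid β) : Setoid (α ⊕ β) :=
  Setoid.ker (Sum.map (Quotient.mk p) (Quotient.mk q))

/-- Reindexing of the rows for the tensor product. -/
def reindex (k l : ℕ) :
    Fin (k + l) ⊕ Fin (k + l) → (Fin k ⊕ Fin k) ⊕ (Fin l ⊕ Fin l) :=
  Sum.elim
    (fun j => Sum.elim (fun a => Sum.inl (Sum.inl a)) (fun b => Sum.inr (Sum.inl b))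
      (finSumFinEquiv.symm j))
    (fun j => Sum.elim (fun a => Sum.inl (Sum.inr a)) (fun b => Sum.inr (Sum.inr b))
      (finSumFinEquiv.symm j))

/-- The tensor product `p ⊗ q ∈ P_{k+l}`: a diagram of `p` placed to the left of
a diagram of `q`. -/
def tensor {k l : ℕ} (p : Pk k) (q : Pk l) : Pk (k + l) :=
  Setoid.comap (reindex k l) (sumSetoid p q)

/-- The `≺`-defect `η(p,q)`. -/
def eta {k : ℕ} (p q : Pk k) : ℚ :=
  pdist (idk k) p + pdist (idk k) q - pdist (idk k) (comp p q)
    - ((k : ℚ) + (nc (comp p q) : ℚ) - (nc p : ℚ) - (nc q : ℚ)) / 2 - (kappaP p q : ℚ)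

/-- The Kreweras complement of `p'` in `p`: the set of `p''` with `p = p' ∘ p''`
realizing equality in the `≺`-defect inequality. -/
def Krew {k : ℕ} (p p' : Pk k) : Set (Pk k) :=
  {p'' | comp p' p'' = p ∧ eta p' p'' = 0}

/-- `p' ≺ p` : `p'` is an admissible prefix of `p`. -/
def prec {k : ℕ} (p' p : Pk k) : Prop :=
  ∃ p'', comp p' p'' = p ∧ eta p' p'' = 0

/-- The partition of `{1,…,k}` into the orbits (cycles) of the permutation `σ`. -/
def cycleSetoid {k : ℕ} (σ : Equiv.Perm (Fin k)) : Setoid (Fin k) :=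
  ⟨σ.SameCycle,
    ⟨fun x => Equiv.Perm.SameCycle.refl σ x, fun h => h.symm, fun h₁ h₂ => h₁.trans h₂⟩⟩

/-- A partition of `{1,…,k}` is non-crossing if there are no `a < b < c < d` with
`a, c` in one block and `b, d` in a different block. -/
def NonCrossing {k : ℕ} (π : Setoid (Fin k)) : Prop :=
  ¬ ∃ a b c d : Fin k, a < b ∧ b < c ∧ c < d ∧ π a c ∧ π b d ∧ ¬ π a b

/-- The map sending a permutation partition to the partition of `{1,…,k}` into
the orbits of the corresponding bijection (the blocks of `p ⊔ id_k` restricted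
to the top row). -/
def orbitMap {k : ℕ} (p : Pk k) : Setoid (Fin k) :=
  Setoid.comap (Sum.inl : Fin k → Fin k ⊕ Fin k) (p ⊔ idk k)

/-- The permutation `(1,k+1)(2,k+2)⋯(k,2k)` of `{1,…,2k}`. -/
def tauPerm (k : ℕ) : Equiv.Perm (Fin (k + k)) :=
  (finSumFinEquiv.symm.trans (Equiv.sumComm (Fin k) (Fin k))).trans finSumFinEquiv

/-- The left part of a partition in `P_{k₁+k₂}`. -/
def leftPart {k₁ k₂ : ℕ} (p : Pk (k₁ + k₂)) : Pk k₁ :=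
  Setoid.comap (Sum.map (Fin.castAdd k₂) (Fin.castAdd k₂)) p

/-- The right part of a partition in `P_{k₁+k₂}`. -/
def rightPart {k₁ k₂ : ℕ} (p : Pk (k₁ + k₂)) : Pk k₂ :=
  Setoid.comap (Sum.map (Fin.natAdd k₁) (Fin.natAdd k₁)) p

/-- The `p`-moment `m_p(E_N) = Tr_N(E_N ᵗp)/N^{nc(p ⊔ id_k)}
`= ∑_{p'} (E_N)_{p'} N^{nc(p ⊔ p') - nc(p ⊔ id_k)}`. -/
def momentF {k : ℕ} (E : ℕ → Pk k → ℂ) (p : Pk k) (N : ℕ) : ℂ :=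
  ∑ᶠ p' : Pk k, E N p' * (N : ℂ) ^ ((nc (p ⊔ p') : ℤ) - (nc (p ⊔ idk k) : ℤ))

/-- The `p`-cumulant `κ_p(E_N) = N^{nc p - nc (p ⊔ id_k)} (E_N)_p`. -/
def cumulantF {k : ℕ} (E : ℕ → Pk k → ℂ) (p : Pk k) (N : ℕ) : ℂ :=
  (N : ℂ) ^ ((nc p : ℤ) - (nc (p ⊔ idk k) : ℤ)) * E N p

set_option linter.unusedSectionVars false

section Aux
variable [Finite X]

/-- The canonical map between quotients. -/
def qmap (p q : Setoid X) (h : p ≤ q) : Quotient p → Quotient q :=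
  Quotient.map' id (fun _ _ hab => h hab)

lemma qmap_mk (p q : Setoid X) (h : p ≤ q) (x : X) :
    qmap p q h (Quotient.mk p x) = Quotient.mk q x := rfl

lemma qmap_surj (p q : Setoid X) (h : p ≤ q) : Function.Surjective (qmap p q h) := by
  intro c
  obtain ⟨x, rfl⟩ := Quotient.exists_rep c
  exact ⟨Quotient.mk p x, rfl⟩

lemma nc_le_of_le {p q : Setoid X} (h : p ≤ q) : nc q ≤ nc p :=
  Nat.card_le_card_of_surjective _ (qmap_surj p q h)

lemma eq_of_le_of_nc_le {p q : Setoid X} (h : p ≤ q) (hn : nc p ≤ nc q) : p = q := by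
  refine le_antisymm h ?_
  have hinj : Function.Injective (qmap p q h) := by
    have := Fintype.ofFinite (Quotient p)
    have := Fintype.ofFinite (Quotient q)
    have hcard : Fintype.card (Quotient p) = Fintype.card (Quotient q) := by
      have h1 := nc_le_of_le h
      simp only [nc, Nat.card_eq_fintype_card] at hn h1
      omega
    exact ((Fintype.bijective_iff_surjective_and_card _).mpr ⟨qmap_surj p q h, hcard⟩).1
  intro a b hab
  have : Quotient.mk q a = Quotient.mk q b := Quotient.sound' hab
  have h2 : qmap p q h (Quotient.mk p a) = qmap p q h (Quotient.mk p b) := by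
    rw [qmap_mk, qmap_mk, this]
  exact Quotient.eq''.mp (hinj h2)

variable (p : Setoid X) (x y : X)

/-- Glue the blocks of `x` and `y` in `p`. -/
def glue : Setoid X :=
  Setoid.ker (fun z =>
    if Quotient.mk p z = Quotient.mk p y then Quotient.mk p x else Quotient.mk p z)

lemma le_glue : p ≤ glue p x y := by
  intro a b hab
  have : Quotient.mk p a = Quotient.mk p b := Quotient.sound' hab
  exact Setoid.ker_def.mpr (by simp [this])

lemma glue_rel : (glue p x y) x y := by
  refine Setoid.ker_def.mpr ?_
  by_cases h : Quotient.mk p x = Quotient.mk p y <;> simp [h]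

lemma glue_le {q : Setoid X} (hpq : p ≤ q) (hxy : q x y) : glue p x y ≤ q := by
  intro a b hab
  have hab' := Setoid.ker_def.mp hab
  by_cases ha : Quotient.mk p a = Quotient.mk p y <;>
    by_cases hb : Quotient.mk p b = Quotient.mk p y <;>
      simp only [ha, hb, if_pos, if_neg, if_true, if_false] at hab'
  · exact hpq (Quotient.eq''.mp (ha.trans hb.symm))
  · -- a ~p y, and mk x = mk b
    have h1 : q a y := hpq (Quotient.eq''.mp ha)
    have h2 : q x b := hpq (Quotient.eq''.mp hab')
    exact q.trans' h1 (q.trans' (q.symm' hxy) h2)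
  · have h1 : q a x := hpq (Quotient.eq''.mp hab')
    have h2 : q y b := hpq (Quotient.eq''.mp hb.symm)
    exact q.trans' h1 (q.trans' hxy h2)
  · exact hpq (Quotient.eq''.mp hab')

lemma nc_glue (hxy : ¬ p x y) : nc (glue p x y) + 1 = nc p := by
  classical
  have hne : Quotient.mk p x ≠ Quotient.mk p y := fun h => hxy (Quotient.eq''.mp h)
  set f : X → Quotient p := fun z =>
    if Quotient.mk p z = Quotient.mk p y then Quotient.mk p x else Quotient.mk p z with hf
  have hrange : Set.range f = {Quotient.mk p y}ᶜ := by
    ext c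
    simp only [Set.mem_range, Set.mem_compl_iff, Set.mem_singleton_iff]
    constructor
    · rintro ⟨z, rfl⟩
      show (if Quotient.mk p z = Quotient.mk p y then Quotient.mk p x else Quotient.mk p z) ≠ _
      split
      · exact hne
      · next h => exact h
    · intro hc
      obtain ⟨z, rfl⟩ := Quotient.exists_rep c
      refine ⟨z, ?_⟩
      show (if Quotient.mk p z = Quotient.mk p y then Quotient.mk p x else Quotient.mk p z) = _
      rw [if_neg hc]
  have h1 : nc (glue p x y) = Nat.card ({Quotient.mk p y}ᶜ : Set (Quotient p)) := by
    rw [show glue p x y = Setoid.ker f from rfl, nc,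
      Nat.card_congr (Setoid.quotientKerEquivRange f), hrange]
  have hy : Nonempty (Quotient p) := ⟨Quotient.mk p y⟩
  have := Fintype.ofFinite (Quotient p)
  rw [h1, nc, Nat.card_eq_fintype_card, Nat.card_eq_fintype_card, Fintype.card_compl_set,
    Set.card_singleton]
  have hpos : 0 < Fintype.card (Quotient p) := Fintype.card_pos
  omega

lemma glue_sup_of_rel (b : Setoid X) (h : (p ⊔ b) x y) : glue p x y ⊔ b = p ⊔ b := by
  refine le_antisymm (sup_le (glue_le p x y le_sup_left h) le_sup_right) ?_
  exact sup_le (le_trans (le_glue p x y) le_sup_left) le_sup_right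

lemma glue_sup_of_not_rel (b : Setoid X) (h : ¬ (p ⊔ b) x y) :
    glue p x y ⊔ b = glue (p ⊔ b) x y := by
  refine le_antisymm ?_ ?_
  · exact sup_le (glue_le p x y (le_trans le_sup_left (le_glue (p ⊔ b) x y)) (glue_rel _ _ _))
      (le_trans le_sup_right (le_glue (p ⊔ b) x y))
  · refine glue_le (p ⊔ b) x y (sup_le (le_trans (le_glue p x y) le_sup_left) le_sup_right) ?_
    exact Setoid.le_def.mp le_sup_left (glue_rel p x y)

lemma nc_sup_glue (b : Setoid X) : nc (p ⊔ b) ≤ nc (glue p x y ⊔ b) + 1 := by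
  by_cases h : (p ⊔ b) x y
  · rw [glue_sup_of_rel p x y b h]; omega
  · rw [glue_sup_of_not_rel p x y b h, nc_glue (p ⊔ b) x y h]

lemma exists_rel_not_rel {p q : Setoid X} (h : p ≤ q) (hne : p ≠ q) :
    ∃ x y, q x y ∧ ¬ p x y := by
  by_contra hc
  push_neg at hc
  exact hne (le_antisymm h (fun a b hab => hc a b hab))

/-- Semimodularity. -/
lemma nc_sub_le (b : Setoid X) : ∀ n (p q : Setoid X), nc p ≤ n → p ≤ q →
    (nc q : ℤ) - nc (q ⊔ b) ≤ (nc p : ℤ) - nc (p ⊔ b) := by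
  intro n
  induction n with
  | zero =>
    intro p q hn hpq
    have h1 : nc (p ⊔ b) ≤ nc p := nc_le_of_le le_sup_left
    have h2 : nc q ≤ nc p := nc_le_of_le hpq
    have h3 : nc (q ⊔ b) ≤ nc q := nc_le_of_le le_sup_left
    omega
  | succ n ih =>
    intro p q hn hpq
    by_cases hne : p = q
    · subst hne; omega
    obtain ⟨x, y, hq, hp⟩ := exists_rel_not_rel hpq hne
    have h1 : nc (glue p x y) + 1 = nc p := nc_glue p x y hp
    have h2 := nc_sup_glue p x y b
    have h3 : glue p x y ≤ q := glue_le p x y hpq hq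
    have h4 := ih (glue p x y) q (by omega) h3
    have h5 : nc (glue p x y ⊔ b) ≤ nc (glue p x y) := nc_le_of_le le_sup_left
    have h6 : nc (p ⊔ b) ≤ nc p := nc_le_of_le le_sup_left
    omega

lemma nc_sub_le' (b : Setoid X) {p q : Setoid X} (hpq : p ≤ q) :
    (nc q : ℤ) - nc (q ⊔ b) ≤ (nc p : ℤ) - nc (p ⊔ b) :=
  nc_sub_le b (nc p) p q le_rfl hpq

end Aux

/-- Twice the geodesic distance, as an integer. -/
def Dd (p q : Setoid X) : ℤ := (nc p : ℤ) + nc q - 2 * nc (p ⊔ q)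

section Aux2
variable [Finite X]

lemma pdist_eq (p q : Setoid X) : pdist p q = (Dd p q : ℚ) / 2 := by
  unfold pdist Dd; push_cast; ring

lemma geoLE_iff (b p' p : Setoid X) : geoLE b p' p ↔ Dd b p' + Dd p' p = Dd b p := by
  unfold geoLE
  rw [pdist_eq, pdist_eq, pdist_eq]
  constructor
  · intro h
    have : ((Dd b p' + Dd p' p : ℤ) : ℚ) = ((Dd b p : ℤ) : ℚ) := by push_cast; linarith
    exact_mod_cast this
  · intro h
    have : ((Dd b p' + Dd p' p : ℤ) : ℚ) = ((Dd b p : ℤ) : ℚ) := by exact_mod_cast h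
    push_cast at this; linarith

lemma Dd_nonneg (p q : Setoid X) : 0 ≤ Dd p q := by
  have h1 : nc (p ⊔ q) ≤ nc p := nc_le_of_le le_sup_left
  have h2 : nc (p ⊔ q) ≤ nc q := nc_le_of_le le_sup_right
  unfold Dd; omega

lemma Dd_eq_zero_iff {p q : Setoid X} : Dd p q = 0 ↔ p = q := by
  constructor
  · intro h
    have h1 : nc (p ⊔ q) ≤ nc p := nc_le_of_le le_sup_left
    have h2 : nc (p ⊔ q) ≤ nc q := nc_le_of_le le_sup_right
    have e1 : p = p ⊔ q := eq_of_le_of_nc_le le_sup_left (by unfold Dd at h; omega)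
    have e2 : q = p ⊔ q := eq_of_le_of_nc_le le_sup_right (by unfold Dd at h; omega)
    exact e1.trans e2.symm
  · rintro rfl
    unfold Dd; rw [sup_idem]; ring

lemma Dd_pos_of_ne {p q : Setoid X} (h : p ≠ q) : 1 ≤ Dd p q := by
  have h1 := Dd_nonneg p q
  have h2 : Dd p q ≠ 0 := fun hc => h (Dd_eq_zero_iff.mp hc)
  omega

lemma Dd_tri (b p q : Setoid X) : Dd b q ≤ Dd b p + Dd p q := by
  have h1 := nc_sub_le' b (le_sup_left : p ≤ p ⊔ q)
  have h2 : nc (p ⊔ q ⊔ b) ≤ nc (b ⊔ q) :=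
    nc_le_of_le (sup_le le_sup_right (le_trans le_sup_right le_sup_left))
  have h3 : nc (b ⊔ p) = nc (p ⊔ b) := by rw [sup_comm]
  unfold Dd; omega

lemma nc_sup_comm (p q : Setoid X) : nc (p ⊔ q) = nc (q ⊔ p) := by rw [sup_comm]

/-- Characterization of covers for the finer-compatible order. -/
lemma finer_cover_iff (b p' p : Setoid X) : DirectlySmaller (finerComp b) p' p ↔
    p' ≤ p ∧ nc p' = nc p + 1 ∧ nc (p' ⊔ b) = nc (p ⊔ b) + 1 := by
  constructor
  · rintro ⟨⟨hle, heq⟩, hne, hno⟩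
    have hn1 : nc p ≤ nc p' := nc_le_of_le hle
    have hn2 : nc p' ≠ nc p := fun h => hne (eq_of_le_of_nc_le hle (le_of_eq h))
    have key : nc p' = nc p + 1 := by
      by_contra hc
      have h2 : nc p + 2 ≤ nc p' := by omega
      obtain ⟨x, y, hrel, hnrel⟩ := exists_rel_not_rel hle hne
      set r := glue p' x y with hr
      have hpr : p' ≤ r := le_glue p' x y
      have hrp : r ≤ p := glue_le p' x y hle hrel
      have hnc : nc r + 1 = nc p' := nc_glue p' x y hnrel
      have s1 := nc_sub_le' b hpr
      have s2 := nc_sub_le' b hrp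
      refine hno ⟨r, ?_, ?_, ⟨hpr, by omega⟩, ⟨hrp, by omega⟩⟩
      · intro h; rw [h] at hnc; omega
      · intro h; rw [h] at hnc; omega
    refine ⟨hle, key, ?_⟩
    have h3 : nc (p ⊔ b) ≤ nc (p' ⊔ b) := nc_le_of_le (sup_le_sup_right hle b)
    omega
  · rintro ⟨hle, h1, h2⟩
    refine ⟨⟨hle, by omega⟩, fun h => by rw [h] at h1; omega, ?_⟩
    rintro ⟨p'', hne_p, hne_p', ⟨h3, -⟩, ⟨h4, -⟩⟩
    have hn1 : nc p ≤ nc p'' := nc_le_of_le h4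
    have hn2 : nc p'' ≤ nc p' := nc_le_of_le h3
    by_cases hc : nc p'' ≤ nc p
    · exact hne_p (eq_of_le_of_nc_le h4 hc)
    · exact hne_p' (eq_of_le_of_nc_le h3 (by omega)).symm

/-- Characterization of covers for the coarser-compatible order. -/
lemma coarser_cover_iff (b p' p : Setoid X) : DirectlySmaller (coarserComp b) p' p ↔
    p ≤ p' ∧ nc p = nc p' + 1 ∧ nc (p' ⊔ b) = nc (p ⊔ b) := by
  constructor
  · rintro ⟨⟨hle, heq⟩, hne, hno⟩
    have hn1 : nc p' ≤ nc p := nc_le_of_le hle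
    have hn2 : nc p ≠ nc p' := fun h => hne (eq_of_le_of_nc_le hle (le_of_eq h)).symm
    have key : nc p = nc p' + 1 := by
      by_contra hc
      have h2 : nc p' + 2 ≤ nc p := by omega
      obtain ⟨x, y, hrel, hnrel⟩ := exists_rel_not_rel hle (Ne.symm hne)
      set r := glue p x y with hr
      have hpr : p ≤ r := le_glue p x y
      have hrp : r ≤ p' := glue_le p x y hle hrel
      have hnc : nc r + 1 = nc p := nc_glue p x y hnrel
      have s1 : nc (p' ⊔ b) ≤ nc (r ⊔ b) := nc_le_of_le (sup_le_sup_right hrp b)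
      have s2 : nc (r ⊔ b) ≤ nc (p ⊔ b) := nc_le_of_le (sup_le_sup_right hpr b)
      refine hno ⟨r, ?_, ?_, ⟨hrp, by omega⟩, ⟨hpr, by omega⟩⟩
      · intro h; rw [h] at hnc; omega
      · intro h; rw [h] at hnc; omega
    exact ⟨hle, key, heq⟩
  · rintro ⟨hle, h1, h2⟩
    refine ⟨⟨hle, h2⟩, fun h => by rw [h] at h1; omega, ?_⟩
    rintro ⟨p'', hne_p, hne_p', ⟨h3, -⟩, ⟨h4, -⟩⟩
    have hn1 : nc p'' ≤ nc p := nc_le_of_le h4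
    have hn2 : nc p' ≤ nc p'' := nc_le_of_le h3
    by_cases hc : nc p ≤ nc p''
    · exact hne_p (eq_of_le_of_nc_le h4 hc).symm
    · exact hne_p' (eq_of_le_of_nc_le h3 (by omega))

end Aux2


/-- Hasse diagram of the geodesic order: `p'` is directly smaller than
`p` for `≤_b` iff `p'` is directly smaller than `p` for `⊐_b` or for `⊣_b`. -/
theorem statement5 {X : Type*} [Finite X] (b p p' : Setoid X) :
    DirectlySmaller (geoLE b) p' p ↔
      DirectlySmaller (finerComp b) p' p ∨ DirectlySmaller (coarserComp b) p' p := by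
  constructor
  · rintro ⟨hgeo, hne, hno⟩
    have hD := (geoLE_iff b p' p).mp hgeo
    have ha : nc (p' ⊔ p) ≤ nc p' := nc_le_of_le le_sup_left
    have hb : nc (p' ⊔ p) ≤ nc p := nc_le_of_le le_sup_right
    have hd1 : Dd p' p = 1 := by
      by_contra hd
      have h2 : 2 ≤ Dd p' p := by have := Dd_pos_of_ne hne; omega
      have hint : ∃ r : Setoid X, r ≠ p ∧ r ≠ p' ∧ Dd p' r + Dd r p = Dd p' p := by
        by_cases hcase : nc p ≤ nc (p' ⊔ p)
        · have hpp : p = p' ⊔ p := eq_of_le_of_nc_le le_sup_right hcase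
          have hple : p' ≤ p := by rw [hpp]; exact le_sup_left
          have hDpp : Dd p' p = (nc p' : ℤ) - nc p := by
            simp only [Dd]; rw [← hpp]; ring
          obtain ⟨x, y, hrel, hnrel⟩ := exists_rel_not_rel hple hne
          have hpr : p' ≤ glue p' x y := le_glue p' x y
          have hrp : glue p' x y ≤ p := glue_le p' x y hple hrel
          have hnc : nc (glue p' x y) + 1 = nc p' := nc_glue p' x y hnrel
          refine ⟨glue p' x y, ?_, ?_, ?_⟩
          · intro h
            rw [h] at hnc
            rw [hDpp] at h2; omega
          · intro h; rw [h] at hnc; omega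
          · simp only [Dd]
            rw [sup_eq_right.mpr hpr, sup_eq_right.mpr hrp, ← hpp]
            ring
        · have hlt : p ≠ p' ⊔ p := by
            intro h; rw [← h] at hcase; omega
          obtain ⟨x, y, hrel, hnrel⟩ := exists_rel_not_rel (le_sup_right : p ≤ p' ⊔ p) hlt
          have hpr : p ≤ glue p x y := le_glue p x y
          have hrq : glue p x y ≤ p' ⊔ p := glue_le p x y le_sup_right hrel
          have hnc : nc (glue p x y) + 1 = nc p := nc_glue p x y hnrel
          have hsup : p' ⊔ glue p x y = p' ⊔ p :=
            le_antisymm (sup_le le_sup_left hrq)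
              (sup_le le_sup_left (le_trans hpr le_sup_right))
          refine ⟨glue p x y, ?_, ?_, ?_⟩
          · intro h; rw [h] at hnc; omega
          · intro h
            have h5 : p' = p' ⊔ p := by rw [← hsup, h, sup_idem]
            have h6 : nc (p' ⊔ p) = nc p' := by rw [← h5]
            rw [h] at hnc
            simp only [Dd] at h2; omega
          · simp only [Dd]
            rw [hsup, sup_eq_left.mpr hpr]
            omega
      obtain ⟨r, hr1, hr2, hbet⟩ := hint
      have t1 := Dd_tri b p' r
      have t2 := Dd_tri b r p
      exact hno ⟨r, hr1, hr2, (geoLE_iff _ _ _).mpr (by omega),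
        (geoLE_iff _ _ _).mpr (by omega)⟩
    simp only [Dd] at hd1 hD
    have hc1 : nc (b ⊔ p') = nc (p' ⊔ b) := nc_sup_comm _ _
    have hc2 : nc (b ⊔ p) = nc (p ⊔ b) := nc_sup_comm _ _
    by_cases hcase : nc p ≤ nc (p' ⊔ p)
    · have hpp : p = p' ⊔ p := eq_of_le_of_nc_le le_sup_right hcase
      have hple : p' ≤ p := by rw [hpp]; exact le_sup_left
      have hq : nc (p' ⊔ p) = nc p := le_antisymm hb hcase
      left
      exact (finer_cover_iff b p' p).mpr ⟨hple, by omega, by omega⟩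
    · have hq : nc p' ≤ nc (p' ⊔ p) := by omega
      have hpp : p' = p' ⊔ p := eq_of_le_of_nc_le le_sup_left hq
      have hple : p ≤ p' := by rw [hpp]; exact le_sup_right
      have hq' : nc (p' ⊔ p) = nc p' := le_antisymm ha hq
      right
      exact (coarser_cover_iff b p' p).mpr ⟨hple, by omega, by omega⟩
  · intro h
    rcases h with h | h
    · obtain ⟨hle, h1, h2⟩ := (finer_cover_iff b p' p).mp h
      have e : nc (p' ⊔ p) = nc p := by rw [sup_eq_right.mpr hle]
      have hc1 : nc (b ⊔ p') = nc (p' ⊔ b) := nc_sup_comm _ _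
      have hc2 : nc (b ⊔ p) = nc (p ⊔ b) := nc_sup_comm _ _
      have hgeo : geoLE b p' p := (geoLE_iff b p' p).mpr (by simp only [Dd]; omega)
      have hdpp : Dd p' p = 1 := by simp only [Dd]; omega
      refine ⟨hgeo, fun hh => by rw [hh] at h1; omega, ?_⟩
      rintro ⟨p'', hnp, hnp', hg1, hg2⟩
      have d1 := (geoLE_iff b p' p'').mp hg1
      have d2 := (geoLE_iff b p'' p).mp hg2
      have hD0 := (geoLE_iff b p' p).mp hgeo
      have q1 := Dd_pos_of_ne (show p' ≠ p'' from fun hh => hnp' hh.symm)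
      have q2 := Dd_pos_of_ne hnp
      omega
    · obtain ⟨hle, h1, h2⟩ := (coarser_cover_iff b p' p).mp h
      have e : nc (p' ⊔ p) = nc p' := by rw [sup_eq_left.mpr hle]
      have hc1 : nc (b ⊔ p') = nc (p' ⊔ b) := nc_sup_comm _ _
      have hc2 : nc (b ⊔ p) = nc (p ⊔ b) := nc_sup_comm _ _
      have hgeo : geoLE b p' p := (geoLE_iff b p' p).mpr (by simp only [Dd]; omega)
      have hdpp : Dd p' p = 1 := by simp only [Dd]; omega
      refine ⟨hgeo, fun hh => by rw [hh] at h1; omega, ?_⟩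
      rintro ⟨p'', hnp, hnp', hg1, hg2⟩
      have d1 := (geoLE_iff b p' p'').mp hg1
      have d2 := (geoLE_iff b p'' p).mp hg2
      have hD0 := (geoLE_iff b p' p).mp hgeo
      have q1 := Dd_pos_of_ne (show p' ≠ p'' from fun hh => hnp' hh.symm)
      have q2 := Dd_pos_of_ne hnp
      omega

end PartitionPaper
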